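/- Let n, N, t, d be positive integers with t ≥ 1 and d ≥ 2, and let S : Fin N → Finset (Fin n) be an indexed family of subsets of [n] (repetitions allowed) with |S_j| ≤ t for every j. Suppose that for every choice function g : Fin d → Fin N there exist distinct indices i, i' ∈ [d] with S_{g(i)} ∩ S_{g(i')} ≠ ∅. Then there exists an element x ∈ [n] such that t · (d − 1) · |{j ∈ [N] : x ∈ S_j}| ≥ N. -/

import Mathlib

/-- **Covering lemma (Lemma 3.7).** Let `S : Fin N → Finset (Fin n)` be a
multiset of subsets of `[n]`, each of size at most `t`. If among any `d`
members (chosen with repetition) some two, at distinct positions, intersect,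
then some element `x ∈ [n]` lies in at least a `1/(t(d−1))` fraction of the
members. -/
theorem covering_lemma (n N t d : ℕ) (hn : 0 < n) (hN : 0 < N)
    (ht : 1 ≤ t) (hd : 2 ≤ d)
    (S : Fin N → Finset (Fin n))
    (hsize : ∀ j, (S j).card ≤ t)
    (hint : ∀ g : Fin d → Fin N, ∃ i i' : Fin d, i ≠ i' ∧
      (S (g i) ∩ S (g i')).Nonempty) :
    ∃ x : Fin n,
      N ≤ t * (d - 1) * (Finset.univ.filter (fun j : Fin N => x ∈ S j)).card := by
  classical
  -- every member is nonempty
  have hne : ∀ j, (S j).Nonempty := by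
    intro j
    obtain ⟨i, i', _, h⟩ := hint (fun _ => j)
    simpa [Finset.inter_self] using h
  -- a maximal pairwise disjoint subfamily
  set P : Finset (Finset (Fin N)) :=
    Finset.univ.filter (fun A => (A : Set (Fin N)).PairwiseDisjoint S) with hP
  have hPne : P.Nonempty := ⟨∅, by simp [hP]⟩
  obtain ⟨A, hAP, hAmax⟩ := P.exists_max_image Finset.card hPne
  have hApd : (A : Set (Fin N)).PairwiseDisjoint S := by
    simpa [hP] using hAP
  -- the maximal family has at most d-1 members
  have hAcard : A.card ≤ d - 1 := by
    by_contra h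
    push_neg at h
    have hd' : d ≤ A.card := by omega
    obtain ⟨B, hBA, hBcard⟩ := Finset.exists_subset_card_eq hd'
    set g : Fin d → Fin N := fun i => (B.orderIsoOfFin hBcard i : Fin N) with hg
    have hginj : Function.Injective g := by
      intro a b hab
      have := Subtype.ext hab
      exact (B.orderIsoOfFin hBcard).injective this
    have hgA : ∀ i, g i ∈ A := fun i => hBA (B.orderIsoOfFin hBcard i).2
    obtain ⟨i, i', hii, hinter⟩ := hint g
    have hdisj : Disjoint (S (g i)) (S (g i')) :=
      hApd (hgA i) (hgA i') (fun he => hii (hginj he))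
    obtain ⟨x, hx⟩ := hinter
    rw [Finset.mem_inter] at hx
    exact (Finset.disjoint_left.1 hdisj hx.1) hx.2
  set U : Finset (Fin n) := A.biUnion S with hU
  -- every member meets U
  have hmeet : ∀ j, (S j ∩ U).Nonempty := by
    intro j
    by_cases hj : j ∈ A
    · obtain ⟨x, hx⟩ := hne j
      exact ⟨x, Finset.mem_inter.2 ⟨hx, Finset.mem_biUnion.2 ⟨j, hj, hx⟩⟩⟩
    · by_contra hcon
      have hmem : (insert j A : Finset (Fin N)) ∈ P := by
        simp only [hP, Finset.mem_filter, Finset.mem_univ, true_and]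
        rw [Finset.coe_insert]
        refine hApd.insert ?_
        intro a ha _
        rw [Finset.disjoint_left]
        intro x hxj hxa
        exact hcon ⟨x, Finset.mem_inter.2 ⟨hxj, Finset.mem_biUnion.2 ⟨a, ha, hxa⟩⟩⟩
      have h1 := hAmax _ hmem
      have h2 : (insert j A).card = A.card + 1 := Finset.card_insert_of_notMem hj
      omega
  have hUcard : U.card ≤ t * (d - 1) := by
    calc U.card ≤ ∑ a ∈ A, (S a).card := Finset.card_biUnion_le
      _ ≤ ∑ _a ∈ A, t := Finset.sum_le_sum fun a _ => hsize a
      _ = A.card * t := by rw [Finset.sum_const, smul_eq_mul]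
      _ ≤ (d - 1) * t := Nat.mul_le_mul_right _ hAcard
      _ = t * (d - 1) := Nat.mul_comm _ _
  have hUne : U.Nonempty := by
    obtain ⟨x, hx⟩ := hmeet ⟨0, hN⟩
    exact ⟨x, (Finset.mem_inter.1 hx).2⟩
  obtain ⟨x, hxU, hxmax⟩ :=
    U.exists_max_image (fun y => (Finset.univ.filter (fun j : Fin N => y ∈ S j)).card) hUne
  refine ⟨x, ?_⟩
  have key : N ≤ ∑ y ∈ U, (Finset.univ.filter (fun j : Fin N => y ∈ S j)).card := by
    calc N = ∑ _j : Fin N, 1 := by simp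
      _ ≤ ∑ j : Fin N, (S j ∩ U).card :=
          Finset.sum_le_sum fun j _ => Finset.card_pos.2 (hmeet j)
      _ = ∑ j : Fin N, ∑ y ∈ U, (if y ∈ S j then 1 else 0) := by
          refine Finset.sum_congr rfl fun j _ => ?_
          rw [← Finset.card_filter]
          congr 1
          exact Finset.inter_comm _ _
      _ = ∑ y ∈ U, ∑ j : Fin N, (if y ∈ S j then 1 else 0) := Finset.sum_comm
      _ = ∑ y ∈ U, (Finset.univ.filter (fun j : Fin N => y ∈ S j)).card := by
          refine Finset.sum_congr rfl fun y _ => ?_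
          rw [Finset.card_filter]
  calc N ≤ ∑ y ∈ U, (Finset.univ.filter (fun j : Fin N => y ∈ S j)).card := key
    _ ≤ U.card * (Finset.univ.filter (fun j : Fin N => x ∈ S j)).card :=
        Finset.sum_le_card_nsmul _ _ _ fun y hy => hxmax y hy
    _ ≤ t * (d - 1) * (Finset.univ.filter (fun j : Fin N => x ∈ S j)).card :=
        Nat.mul_le_mul_right _ hUcard
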